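/- Let H̄ be a symmetric n×n real matrix, b ∈ ℝⁿ with ‖b‖ = 1, and consider CG applied to H̄ with g = −b. Suppose the iterates are well defined up to index J with p_jᵀ H̄ p_j > 0 and r_j ≠ 0 for all j = 0,…,J. Then every nonzero vector z in the Krylov subspace K_J(b, H̄) satisfies zᵀ H̄ z > 0; that is, K_J(b, H̄) contains no nonzero direction of nonpositive curvature for H̄. -/

import Mathlib

open RealInnerProductSpace

/-- If CG runs to index `J` without encountering nonpositive curvature or a
zero residual, then the Krylov subspace `K_J(b, H̄)` contains no nonzero
direction of nonpositive curvature for `H̄`. -/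
theorem stmt10
    {n : ℕ} (Hb : EuclideanSpace ℝ (Fin n) →L[ℝ] EuclideanSpace ℝ (Fin n))
    (hsym : ∀ x y : EuclideanSpace ℝ (Fin n), ⟪Hb x, y⟫ = ⟪x, Hb y⟫)
    (b : EuclideanSpace ℝ (Fin n)) (hb : ‖b‖ = 1)
    (J : ℕ)
    (y r p : ℕ → EuclideanSpace ℝ (Fin n)) (α : ℕ → ℝ)
    (hy0 : y 0 = 0) (hr0 : r 0 = -b) (hp0 : p 0 = b)
    (hα : ∀ j < J, α j = ‖r j‖^2 / ⟪p j, Hb (p j)⟫)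
    (hyrec : ∀ j < J, y (j+1) = y j + α j • p j)
    (hrrec : ∀ j < J, r (j+1) = r j + α j • Hb (p j))
    (hprec : ∀ j < J, p (j+1) = -(r (j+1)) + (‖r (j+1)‖^2 / ‖r j‖^2) • p j)
    (hpcurv : ∀ j ≤ J, 0 < ⟪p j, Hb (p j)⟫)
    (hrne : ∀ j ≤ J, r j ≠ 0) :
    ∀ z ∈ Submodule.span ℝ {v | ∃ i ≤ J, v = (Hb ^ i) b},
      z ≠ 0 → 0 < ⟪z, Hb z⟫ := by
  -- norms of residuals are positive
  have hrsq : ∀ j ≤ J, 0 < ‖r j‖^2 := fun j hj =>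
    pow_pos (norm_pos_iff.mpr (hrne j hj)) 2
  -- α is positive
  have hαpos : ∀ j < J, 0 < α j := by
    intro j hj
    rw [hα j hj]
    exact div_pos (hrsq j hj.le) (hpcurv j hj.le)
  -- the key CG invariants: residual ⟂ previous directions, conjugacy
  have key : ∀ k, k ≤ J →
      (∀ i < k, ⟪r k, p i⟫ = 0) ∧ (∀ i < k, ⟪p i, Hb (p k)⟫ = 0) := by
    intro k
    induction k with
    | zero => intro _; exact ⟨fun i hi => absurd hi (Nat.not_lt_zero i),
        fun i hi => absurd hi (Nat.not_lt_zero i)⟩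
    | succ k ih =>
      intro hk
      have hkJ : k < J := hk
      have hkle : k ≤ J := hkJ.le
      obtain ⟨rp, conj⟩ := ih hkle
      have hcurv : 0 < ⟪p k, Hb (p k)⟫ := hpcurv k hkle
      have hαk : α k * ⟪p k, Hb (p k)⟫ = ‖r k‖^2 := by
        rw [hα k hkJ, div_mul_cancel₀ _ (ne_of_gt hcurv)]
      -- ⟪r k, p k⟫ = -‖r k‖²
      have hrpk : ⟪r k, p k⟫ = -‖r k‖^2 := by
        cases k with
        | zero =>
          rw [hr0, hp0, inner_neg_left, norm_neg, real_inner_self_eq_norm_sq]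
        | succ m =>
          have hmJ : m < J := lt_trans (Nat.lt_succ_self m) hkJ
          rw [hprec m hmJ, inner_add_right, inner_neg_right,
            real_inner_smul_right, real_inner_self_eq_norm_sq,
            rp m (Nat.lt_succ_self m), mul_zero, add_zero]
      -- orthogonality of new residual to all previous directions
      have rp1 : ∀ i ≤ k, ⟪r (k+1), p i⟫ = 0 := by
        intro i hi
        rw [hrrec k hkJ, inner_add_left, real_inner_smul_left]
        rcases eq_or_lt_of_le hi with heq | hlt
        · subst heq
          have : ⟪Hb (p i), p i⟫ = ⟪p i, Hb (p i)⟫ := real_inner_comm _ _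
          rw [hrpk, this, hαk]
          ring
        · rw [rp i hlt, real_inner_comm, conj i hlt, mul_zero, add_zero]
      -- orthogonality of new residual to all previous residuals
      have rro : ∀ i ≤ k, ⟪r (k+1), r i⟫ = 0 := by
        intro i hi
        cases i with
        | zero =>
          have : r 0 = -(p 0) := by rw [hr0, hp0]
          rw [this, inner_neg_right, rp1 0 (Nat.zero_le k), neg_zero]
        | succ m =>
          have hmJ : m < J := lt_of_lt_of_le (Nat.lt_of_succ_le hi) hkJ.le
          have : r (m+1) = -(p (m+1)) + (‖r (m+1)‖^2 / ‖r m‖^2) • p m := by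
            rw [hprec m hmJ]; abel
          rw [this, inner_add_right, inner_neg_right, real_inner_smul_right,
            rp1 (m+1) hi, rp1 m (le_trans (Nat.le_succ m) hi), neg_zero,
            mul_zero, add_zero]
      refine ⟨fun i hi => rp1 i (Nat.lt_succ_iff.mp hi), fun i hi => ?_⟩
      have hi' : i ≤ k := Nat.lt_succ_iff.mp hi
      have hiJ : i < J := lt_of_le_of_lt hi' hkJ
      -- rewrite via symmetry to ⟪p (k+1), Hb (p i)⟫
      rw [← hsym, real_inner_comm]
      -- expression for Hb (p i)
      have hαine : α i ≠ 0 := ne_of_gt (hαpos i hiJ)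
      have hHpi : Hb (p i) = (α i)⁻¹ • (r (i+1) - r i) := by
        rw [hrrec i hiJ, add_sub_cancel_left, smul_smul,
          inv_mul_cancel₀ hαine, one_smul]
      rcases eq_or_lt_of_le hi' with heq | hlt
      · subst heq
        have t1 : ⟪r (i+1), Hb (p i)⟫ = (α i)⁻¹ * ‖r (i+1)‖^2 := by
          rw [hHpi, real_inner_smul_right, inner_sub_right, rro i le_rfl,
            real_inner_self_eq_norm_sq]
          ring
        have t2 : ⟪p i, Hb (p i)⟫ = ‖r i‖^2 / α i := by
          rw [eq_div_iff hαine, mul_comm, hαk]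
        rw [hprec i hkJ, inner_add_left, inner_neg_left,
          real_inner_smul_left, t1, t2]
        field_simp [hαine, (hrsq i hiJ.le).ne']
        rw [div_self (norm_ne_zero_iff.mpr (hrne i hiJ.le))]; ring
      · have t1 : ⟪r (k+1), Hb (p i)⟫ = 0 := by
          rw [hHpi, real_inner_smul_right, inner_sub_right,
            rro (i+1) hlt, rro i hlt.le]
          ring
        have t2 : ⟪p k, Hb (p i)⟫ = 0 := by
          rw [← hsym, real_inner_comm, conj i hlt]
        rw [hprec k hkJ, inner_add_left, inner_neg_left,
          real_inner_smul_left, t1, t2]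
        ring
  -- conjugacy in both orders
  have hconj : ∀ i ≤ J, ∀ j ≤ J, i ≠ j → ⟪p i, Hb (p j)⟫ = 0 := by
    intro i hi j hj hne
    rcases lt_or_gt_of_ne hne with h | h
    · exact (key j hj).2 i h
    · rw [← hsym, real_inner_comm]
      exact (key i hi).2 j h
  -- monotonicity of the partial spans
  have hmono : ∀ a c : ℕ, a ≤ c →
      Submodule.span ℝ {v | ∃ l ≤ a, v = p l} ≤
        Submodule.span ℝ {v | ∃ l ≤ c, v = p l} := by
    intro a c hac
    apply Submodule.span_mono
    rintro v ⟨l, hl, rfl⟩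
    exact ⟨l, le_trans hl hac, rfl⟩
  -- residuals lie in the span of the directions
  have hrmem : ∀ m ≤ J, r m ∈ Submodule.span ℝ {v | ∃ l ≤ m, v = p l} := by
    intro m
    induction m with
    | zero =>
      intro _
      have e : r 0 = -(p 0) := by rw [hr0, hp0]
      rw [e]
      exact Submodule.neg_mem _ (Submodule.subset_span ⟨0, le_rfl, rfl⟩)
    | succ m ih =>
      intro hm
      have hmJ : m < J := hm
      have e : r (m+1) = -(p (m+1)) + (‖r (m+1)‖^2 / ‖r m‖^2) • p m := by
        rw [hprec m hmJ]; abel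
      rw [e]
      exact Submodule.add_mem _
        (Submodule.neg_mem _ (Submodule.subset_span ⟨m+1, le_rfl, rfl⟩))
        (Submodule.smul_mem _ _
          (Submodule.subset_span ⟨m, Nat.le_succ m, rfl⟩))
  -- Krylov vectors lie in the span of the directions
  have hK : ∀ i ≤ J, (Hb ^ i) b ∈
      Submodule.span ℝ {v | ∃ l ≤ i, v = p l} := by
    intro i
    induction i with
    | zero =>
      intro _
      have e : (Hb ^ 0) b = p 0 := by rw [hp0]; rfl
      rw [e]
      exact Submodule.subset_span ⟨0, le_rfl, rfl⟩
    | succ i ih =>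
      intro hi
      have hiJ : i < J := hi
      have h1 : (Hb ^ (i+1)) b = Hb ((Hb ^ i) b) := by
        rw [pow_succ']; rfl
      rw [h1]
      have hHmem : ∀ l ≤ i, Hb (p l) ∈
          Submodule.span ℝ {v | ∃ l ≤ i+1, v = p l} := by
        intro l hl
        have hlJ : l < J := lt_of_le_of_lt hl hiJ
        have hαlne : α l ≠ 0 := ne_of_gt (hαpos l hlJ)
        have e : Hb (p l) = (α l)⁻¹ • (r (l+1) - r l) := by
          rw [hrrec l hlJ, add_sub_cancel_left, smul_smul,
            inv_mul_cancel₀ hαlne, one_smul]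
        rw [e]
        exact Submodule.smul_mem _ _ (Submodule.sub_mem _
          (hmono (l+1) (i+1) (Nat.succ_le_succ hl) (hrmem (l+1) hlJ))
          (hmono l (i+1) (le_trans hl (Nat.le_succ i)) (hrmem l hlJ.le)))
      have hmap : Hb ((Hb ^ i) b) ∈
          Submodule.map (Hb : EuclideanSpace ℝ (Fin n) →ₗ[ℝ] _)
            (Submodule.span ℝ {v | ∃ l ≤ i, v = p l}) :=
        Submodule.mem_map_of_mem (ih hiJ.le)
      rw [Submodule.map_span] at hmap
      refine Submodule.span_le.mpr ?_ hmap
      rintro v ⟨w, ⟨l, hl, rfl⟩, rfl⟩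
      exact hHmem l hl
  -- put the direction set in `Fin (J+1)`-indexed form
  have hset : {v : EuclideanSpace ℝ (Fin n) | ∃ l ≤ J, v = p l} =
      Set.range (fun i : Fin (J+1) => p i.val) := by
    ext v
    constructor
    · rintro ⟨l, hl, rfl⟩
      exact ⟨⟨l, Nat.lt_succ_of_le hl⟩, rfl⟩
    · rintro ⟨i, rfl⟩
      exact ⟨i.val, Nat.lt_succ_iff.mp i.isLt, rfl⟩
  intro z hz hzne
  have hzp : z ∈ Submodule.span ℝ
      (Set.range (fun i : Fin (J+1) => p i.val)) := by
    rw [← hset]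
    refine Submodule.span_le.mpr ?_ hz
    rintro v ⟨i, hi, rfl⟩
    exact hmono i J hi (hK i hi)
  obtain ⟨c, hc⟩ := Submodule.mem_span_range_iff_exists_fun ℝ |>.mp hzp
  have hcurvpos : ∀ i : Fin (J+1), 0 < ⟪p i.val, Hb (p i.val)⟫ :=
    fun i => hpcurv i.val (Nat.lt_succ_iff.mp i.isLt)
  have hexpand : ⟪z, Hb z⟫ =
      ∑ i : Fin (J+1), (c i)^2 * ⟪p i.val, Hb (p i.val)⟫ := by
    rw [← hc, map_sum, sum_inner]
    refine Finset.sum_congr rfl fun i _ => ?_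
    rw [inner_sum]
    rw [Finset.sum_eq_single i]
    · rw [map_smul, real_inner_smul_left, real_inner_smul_right]
      ring
    · intro j _ hji
      have hne : i.val ≠ j.val := fun h => hji (Fin.ext h.symm)
      rw [map_smul, real_inner_smul_left, real_inner_smul_right,
        hconj i.val (Nat.lt_succ_iff.mp i.isLt) j.val
          (Nat.lt_succ_iff.mp j.isLt) hne]
      ring
    · intro h
      exact absurd (Finset.mem_univ i) h
  rw [hexpand]
  have hcex : ∃ i, c i ≠ 0 := by
    by_contra hall
    push_neg at hall
    apply hzne
    rw [← hc]
    simp [hall]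
  obtain ⟨i, hi⟩ := hcex
  refine Finset.sum_pos' (fun j _ => mul_nonneg (sq_nonneg _) (hcurvpos j).le)
    ⟨i, Finset.mem_univ i, mul_pos (by positivity) (hcurvpos i)⟩
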